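/- Let α_n be 1 plus the number of subsets T ⊆ {1,...,n-1} such that the subword of the alternating word z_{n-1} = xyxy... (length n-1) at positions T is alternating. Then α_n equals the Fibonacci number F_{n+2} (with F_1 = F_2 = 1). Equivalently, the number of vertices of the descent polytope DP_{z_{n-1}} is F_{n+2}. -/

import Mathlib

/-- `κ(w) = 2 + #{i : w_i ≠ w_{i+1}}` for nonempty `w`, and `κ(empty) = 1`. -/
def kappa (w : List Bool) : ℕ :=
  if w = [] then 1 else 2 + (w.zip w.tail).countP (fun p => p.1 != p.2)

/-- The subword of `v` at the (1-indexed) positions in `T`. -/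
def subword (v : List Bool) (T : Finset ℕ) : List Bool :=
  ((v.zipIdx.map Prod.swap).filter (fun p => decide (p.1 + 1 ∈ T))).map Prod.snd

/-- The alternating word of length `m` starting with `x` (where `x = false`, `y = true`). -/
def zWord (m : ℕ) : List Bool := (List.range m).map (fun i => decide (i % 2 = 1))

open Finset List

/-- parity-alternating predicate on a finset, via its sorted list -/
def altp (S : Finset ℕ) : Prop :=
  List.IsChain (fun a b => ¬ a % 2 = b % 2) (S.sort (· ≤ ·))

instance : DecidablePred altp := fun S => by unfold altp; infer_instance

def Acnt (m : ℕ) : ℕ := ((Finset.range m).powerset.filter altp).card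
def Bcnt (m : ℕ) : ℕ := ((Finset.range m).powerset.filter (fun S => altp (insert m S))).card

lemma sort_insert_top {S : Finset ℕ} {a : ℕ} (h : ∀ x ∈ S, x < a) :
    (insert a S).sort (· ≤ ·) = S.sort (· ≤ ·) ++ [a] := by
  apply List.Perm.eq_of_pairwise' (r := (· ≤ ·))
  rotate_right
  · refine List.perm_of_nodup_nodup_toFinset_eq ?_ ?_ ?_
    · exact Finset.sort_nodup _ _
    · refine List.Nodup.append (Finset.sort_nodup _ _) (List.nodup_singleton a) ?_
      intro x hx hxa
      simp at hxa; subst hxa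
      exact absurd (h x (by simpa using (Finset.mem_sort _).1 hx)) (lt_irrefl _)
    · ext x
      simp [Finset.mem_sort]
  · exact Finset.pairwise_sort _ _
  · rw [List.pairwise_append]
    refine ⟨Finset.pairwise_sort _ _, List.pairwise_singleton _ a, ?_⟩
    intro x hx y hy
    simp at hy; subst hy
    exact (h x (by simpa using (Finset.mem_sort _).1 hx)).le

lemma altp_insert_iff {S : Finset ℕ} {a : ℕ} (h : ∀ x ∈ S, x < a) :
    altp (insert a S) ↔ altp S ∧ ∀ x ∈ (S.sort (· ≤ ·)).getLast?, ¬ x % 2 = a % 2 := by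
  unfold altp
  rw [sort_insert_top h, List.isChain_append]
  simp

lemma altp_empty : altp (∅ : Finset ℕ) := by simp [altp]

lemma altp_of_altp_insert {S : Finset ℕ} {a : ℕ} (h : ∀ x ∈ S, x < a)
    (H : altp (insert a S)) : altp S := ((altp_insert_iff h).1 H).1

lemma sort_ne_nil {S : Finset ℕ} (h : S ≠ ∅) : S.sort (· ≤ ·) ≠ [] := by
  intro hs
  apply h
  ext x
  simp only [Finset.notMem_empty, iff_false]
  intro hx
  have := (Finset.mem_sort (α := ℕ) (· ≤ ·)).2 hx
  rw [hs] at this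
  simp at this

lemma card_filter_powerset_succ (m : ℕ) (p : Finset ℕ → Prop) [DecidablePred p] :
    ((Finset.range (m+1)).powerset.filter p).card
      = ((Finset.range m).powerset.filter p).card
        + ((Finset.range m).powerset.filter (fun S => p (insert m S))).card := by
  rw [Finset.range_add_one, Finset.powerset_insert, Finset.filter_union,
    Finset.card_union_of_disjoint, Finset.filter_image,
    Finset.card_image_of_injOn]
  · intro S hS S' hS' hSS'
    simp only [Finset.mem_coe, Finset.mem_filter, Finset.mem_powerset] at hS hS'
    have hm : m ∉ S := fun h => by simpa using hS.1 h
    have hm' : m ∉ S' := fun h => by simpa using hS'.1 h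
    have := congrArg (Finset.erase · m) hSS'
    simpa [Finset.erase_insert hm, Finset.erase_insert hm'] using this
  · rw [Finset.disjoint_left]
    intro S hS hS'
    simp only [Finset.mem_filter, Finset.mem_powerset, Finset.mem_image] at hS hS'
    obtain ⟨⟨S', hS', rfl⟩, -⟩ := hS'
    exact (by simpa using hS.1 (Finset.mem_insert_self m S') : (m:ℕ) < m).false

lemma AB_succ (m : ℕ) : Acnt (m+1) = Acnt m + Bcnt m :=
  card_filter_powerset_succ m altp

lemma altp_singleton (a : ℕ) : altp ({a} : Finset ℕ) := by
  simp [altp]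

lemma B_succ (m : ℕ) : Bcnt (m+1) = Acnt m + 1 := by
  have hins : ∀ S ∈ (Finset.range m).powerset,
      (altp (insert (m+1) (insert m S)) ↔ altp (insert m S)) := by
    intro S hS
    simp only [Finset.mem_powerset] at hS
    have hlt : ∀ x ∈ S, x < m := fun x hx => by simpa using hS hx
    have hlt' : ∀ x ∈ insert m S, x < m + 1 := by
      intro x hx
      rcases Finset.mem_insert.1 hx with rfl | hx
      · omega
      · exact (hlt x hx).trans (Nat.lt_succ_self m)
    rw [altp_insert_iff hlt', sort_insert_top hlt, List.getLast?_concat]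
    simp only [Option.mem_some_iff, forall_eq]
    constructor
    · exact fun h => h.1
    · exact fun h => ⟨h, by omega⟩
  have key : ((Finset.range m).powerset.filter (fun S => altp (insert (m+1) S))).card
      + ((Finset.range m).powerset.filter (fun S => altp (insert m S))).card
      = Acnt m + 1 := by
    rw [← Finset.card_union_add_card_inter]
    congr 1
    · -- union equals filter altp
      unfold Acnt
      rw [← Finset.filter_or]
      apply congrArg
      apply Finset.filter_congr
      intro S hS
      simp only [Finset.mem_powerset] at hS
      have hlt : ∀ x ∈ S, x < m := fun x hx => by simpa using hS hx
      have hlt' : ∀ x ∈ S, x < m + 1 := fun x hx => (hlt x hx).trans (Nat.lt_succ_self m)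
      rw [altp_insert_iff hlt', altp_insert_iff hlt]
      constructor
      · rintro (h | h) <;> exact h.1
      · intro h
        refine ?_
        cases hg : (S.sort (· ≤ ·)).getLast? with
        | none => exact Or.inl ⟨h, by simp [hg]⟩
        | some x =>
          rcases Nat.lt_or_ge 0 1 with _ | _
          · by_cases hx : x % 2 = m % 2
            · exact Or.inl ⟨h, by simp [hg]; omega⟩
            · exact Or.inr ⟨h, by simp [hg]; omega⟩
          · omega
    · -- intersection is {∅}
      have : ((Finset.range m).powerset.filter (fun S => altp (insert (m+1) S)))
          ∩ ((Finset.range m).powerset.filter (fun S => altp (insert m S))) = {∅} := by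
        ext S
        simp only [Finset.mem_inter, Finset.mem_filter, Finset.mem_powerset,
          Finset.mem_singleton]
        constructor
        · rintro ⟨⟨hS, h1⟩, -, h2⟩
          by_contra hne
          have hlt : ∀ x ∈ S, x < m := fun x hx => by simpa using hS hx
          have hlt' : ∀ x ∈ S, x < m + 1 := fun x hx => (hlt x hx).trans (Nat.lt_succ_self m)
          obtain ⟨x, hx⟩ := Option.isSome_iff_exists.1
            (List.getLast?_isSome.2 (sort_ne_nil hne))
          have c1 := ((altp_insert_iff hlt').1 h1).2 x (by simp [hx])
          have c2 := ((altp_insert_iff hlt).1 h2).2 x (by simp [hx])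
          omega
        · rintro rfl
          refine ⟨⟨Finset.empty_subset _, ?_⟩, Finset.empty_subset _, ?_⟩ <;>
            simpa using altp_singleton _
      rw [this]
      simp
  unfold Bcnt
  rw [card_filter_powerset_succ m (fun S => altp (insert (m+1) S)),
    Finset.filter_congr hins, key]

lemma A_fib : ∀ m, Acnt m + 1 = Nat.fib (m+3) ∧ Bcnt m = Nat.fib (m+2) := by
  intro m
  induction m with
  | zero =>
    have h1 : Acnt 0 = 1 := by
      simp [Acnt, Finset.range_zero, Finset.powerset_empty, Finset.filter_singleton, altp_empty]
    have h2 : Bcnt 0 = 1 := by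
      simp [Bcnt, Finset.range_zero, Finset.powerset_empty, Finset.filter_singleton,
        altp_singleton]
    rw [h1, h2]
    constructor <;> rfl
  | succ m ih =>
    obtain ⟨hA, hB⟩ := ih
    constructor
    · rw [AB_succ]
      have e1 : m + 1 + 3 = (m + 2) + 2 := by ring
      have e2 : m + 2 + 1 = m + 3 := by ring
      rw [e1, Nat.fib_add_two, e2]
      omega
    · rw [B_succ, hA]

lemma zip_self {α : Type} (l : List α) : l.zip l = l.map (fun i => (i, i)) := by
  induction l with
  | nil => rfl
  | cons a l ih => simp [List.zip_cons_cons, ih]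

lemma enum_range (m : ℕ) : (List.range m).zipIdx = (List.range m).map (fun i => (i, i)) := by
  rw [List.zipIdx_eq_zip_range', List.length_range, ← List.range_eq_range', zip_self]

lemma subword_zWord (m : ℕ) (T : Finset ℕ) :
    subword (zWord m) T
      = ((List.range m).filter (fun i => decide (i+1 ∈ T))).map (fun i => decide (i % 2 = 1)) := by
  unfold subword zWord
  rw [List.zipIdx_map, enum_range, List.map_map, List.map_map, List.filter_map, List.map_map]
  rfl

lemma filter_range_eq_sort {S : Finset ℕ} {m : ℕ} (h : S ⊆ Finset.range m) :
    (List.range m).filter (fun i => decide (i ∈ S)) = S.sort (· ≤ ·) := by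
  apply List.Perm.eq_of_pairwise' (r := (· ≤ ·))
  rotate_right
  · refine List.perm_of_nodup_nodup_toFinset_eq ?_ (Finset.sort_nodup _ _) ?_
    · exact (List.nodup_range (n := m)).filter _
    · ext x
      simp only [List.toFinset_filter, List.mem_toFinset, Finset.mem_filter]
      simp only [List.mem_range, decide_eq_true_eq, Finset.mem_sort]
      constructor
      · exact fun hx => hx.2
      · exact fun hx => ⟨by simpa using h hx, hx⟩
  · exact List.Pairwise.imp le_of_lt (List.pairwise_lt_range.filter _)
  · exact Finset.pairwise_sort _ _

lemma decide_parity_iff (a b : ℕ) :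
    (decide (a % 2 = 1) ≠ decide (b % 2 = 1)) ↔ ¬ a % 2 = b % 2 := by
  rw [ne_eq, decide_eq_decide]
  omega

lemma chain_iff_altp {m : ℕ} {T : Finset ℕ} (hT : T ⊆ Finset.Icc 1 m) :
    List.IsChain (· ≠ ·) (subword (zWord m) T) ↔ altp (T.image (· - 1)) := by
  set S := T.image (· - 1) with hS
  have hSm : S ⊆ Finset.range m := by
    intro x hx
    simp only [hS, Finset.mem_image] at hx
    obtain ⟨t, ht, rfl⟩ := hx
    have := Finset.mem_Icc.1 (hT ht)
    simp only [Finset.mem_range]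
    omega
  have hmem : ∀ i : ℕ, (i + 1 ∈ T) ↔ i ∈ S := by
    intro i
    constructor
    · intro hi
      exact Finset.mem_image.2 ⟨i + 1, hi, rfl⟩
    · intro hi
      obtain ⟨t, ht, rfl⟩ := Finset.mem_image.1 hi
      have := Finset.mem_Icc.1 (hT ht)
      have : t - 1 + 1 = t := by omega
      rwa [this]
  rw [subword_zWord]
  have hfil : (List.range m).filter (fun i => decide (i+1 ∈ T))
      = (List.range m).filter (fun i => decide (i ∈ S)) := by
    apply List.filter_congr
    intro x _
    exact decide_eq_decide.2 (hmem x)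
  rw [hfil, filter_range_eq_sort hSm, List.isChain_map]
  unfold altp
  constructor
  · exact fun h => h.imp (fun {a b} hab => (decide_parity_iff a b).1 hab)
  · exact fun h => h.imp (fun {a b} hab => (decide_parity_iff a b).2 hab)

lemma card_eq_Acnt (m : ℕ) :
    ((Finset.Icc 1 m).powerset.filter
      (fun T => List.IsChain (· ≠ ·) (subword (zWord m) T))).card = Acnt m := by
  unfold Acnt
  refine Finset.card_bij' (fun T _ => T.image (· - 1)) (fun S _ => S.image (· + 1))
    ?_ ?_ ?_ ?_
  · intro T hT
    simp only [Finset.mem_filter, Finset.mem_powerset] at hT ⊢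
    obtain ⟨hTsub, hTc⟩ := hT
    refine ⟨?_, (chain_iff_altp hTsub).1 hTc⟩
    intro x hx
    obtain ⟨t, ht, rfl⟩ := Finset.mem_image.1 hx
    have := Finset.mem_Icc.1 (hTsub ht)
    simp only [Finset.mem_range]; omega
  · intro S hS
    simp only [Finset.mem_filter, Finset.mem_powerset] at hS ⊢
    obtain ⟨hSsub, hSa⟩ := hS
    have hTsub : S.image (· + 1) ⊆ Finset.Icc 1 m := by
      intro x hx
      obtain ⟨s, hs, rfl⟩ := Finset.mem_image.1 hx
      have := Finset.mem_range.1 (hSsub hs)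
      simp only [Finset.mem_Icc]; omega
    refine ⟨hTsub, (chain_iff_altp hTsub).2 ?_⟩
    have : (S.image (· + 1)).image (· - 1) = S := by
      rw [Finset.image_image]
      have : ((· - 1) ∘ (· + 1) : ℕ → ℕ) = id := by
        funext x; simp
      rw [this, Finset.image_id]
    rwa [this]
  · intro T hT
    simp only [Finset.mem_filter, Finset.mem_powerset] at hT
    ext x
    simp only [Finset.mem_image]
    constructor
    · rintro ⟨y, ⟨t, ht, rfl⟩, rfl⟩
      have := Finset.mem_Icc.1 (hT.1 ht)
      have e : t - 1 + 1 = t := by omega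
      rwa [e]
    · intro hx
      have := Finset.mem_Icc.1 (hT.1 hx)
      exact ⟨x - 1, ⟨x, hx, rfl⟩, by omega⟩
  · intro S hS
    show (S.image (· + 1)).image (· - 1) = S
    rw [Finset.image_image]
    have : ((· - 1) ∘ (· + 1) : ℕ → ℕ) = id := by
      funext x; simp
    rw [this, Finset.image_id]


/-- one plus the number of alternating subwords of `z_{n-1}` is the
Fibonacci number `F_{n+2}`. -/
theorem stmt13 (n : ℕ) (hn : 1 ≤ n) :
    1 + ((Finset.Icc 1 (n - 1)).powerset.filter
          (fun T => List.IsChain (· ≠ ·) (subword (zWord (n - 1)) T))).card =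
      Nat.fib (n + 2) := by
  rw [card_eq_Acnt, Nat.add_comm]
  have := (A_fib (n - 1)).1
  have e : n - 1 + 3 = n + 2 := by omega
  rwa [e] at this
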